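/- If (u,p,v,π) ∈ ℝ^{2(p+q)} satisfies H₁ = H₂ = D = 0, is not the origin, and the pair (u,p) is linearly dependent, then the pair (v,π) is also linearly dependent. Moreover (u,p) ≠ (0,0) and (v,π) ≠ (0,0). -/

import Mathlib

open scoped BigOperators

namespace Stmt6

abbrev Phase (np nq : ℕ) := (Fin np → ℝ) × (Fin np → ℝ) × (Fin nq → ℝ) × (Fin nq → ℝ)

variable {np nq : ℕ}

noncomputable def H1 (x : Phase np nq) : ℝ :=
  (1/2) * ((∑ i, (x.2.1 i)^2) - ∑ j, (x.2.2.1 j)^2)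

noncomputable def H2 (x : Phase np nq) : ℝ :=
  (1/2) * ((∑ j, (x.2.2.2 j)^2) - ∑ i, (x.1 i)^2)

noncomputable def Dc (x : Phase np nq) : ℝ :=
  (∑ i, x.1 i * x.2.1 i) - ∑ j, x.2.2.1 j * x.2.2.2 j

lemma sq_sum_zero {n : ℕ} (f : Fin n → ℝ) (h : ∑ i, (f i)^2 = 0) : f = 0 := by
  funext i
  have h' := (Finset.sum_eq_zero_iff_of_nonneg (fun i _ => sq_nonneg (f i))).mp h i
    (Finset.mem_univ i)
  have := pow_eq_zero_iff (two_ne_zero) |>.mp h'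
  simpa using this

/-- If the constraints hold, the point is not the origin, and `(u,p)` is linearly
dependent, then `(v,π)` is linearly dependent; moreover `(u,p) ≠ (0,0)` and
`(v,π) ≠ (0,0)`. -/
theorem exceptional_structure (hp : 1 ≤ np) (hq : 1 ≤ nq) (x : Phase np nq)
    (h1 : H1 x = 0) (h2 : H2 x = 0) (hD : Dc x = 0)
    (hx : x ≠ 0)
    (hdep : ∃ a b : ℝ, (a, b) ≠ (0, 0) ∧ a • x.1 + b • x.2.1 = 0) :
    (∃ a b : ℝ, (a, b) ≠ (0, 0) ∧ a • x.2.2.1 + b • x.2.2.2 = 0) ∧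
    (x.1, x.2.1) ≠ (0, 0) ∧
    (x.2.2.1, x.2.2.2) ≠ (0, 0) := by
  obtain ⟨u, p, v, w⟩ := x
  simp only [H1, H2, Dc] at h1 h2 hD
  dsimp only at *
  have hP : ∑ i, (p i)^2 = ∑ j, (v j)^2 := by linarith
  have hU : ∑ j, (w j)^2 = ∑ i, (u i)^2 := by linarith
  have hDD : ∑ i, u i * p i = ∑ j, v j * w j := by linarith
  -- nonvanishing of (v,w) given u = p = 0 etc.
  have hvw_of_up : u = 0 → p = 0 → v = 0 ∧ w = 0 := by
    intro hu hp0
    constructor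
    · exact sq_sum_zero v (by rw [← hP, hp0]; simp)
    · exact sq_sum_zero w (by rw [hU, hu]; simp)
  have hup_of_vw : v = 0 → w = 0 → u = 0 ∧ p = 0 := by
    intro hv hw
    constructor
    · exact sq_sum_zero u (by rw [← hU, hw]; simp)
    · exact sq_sum_zero p (by rw [hP, hv]; simp)
  have hne1 : ((u, p) : (Fin np → ℝ) × (Fin np → ℝ)) ≠ (0, 0) := by
    intro h
    obtain ⟨hu, hp0⟩ := Prod.mk.inj h
    obtain ⟨hv, hw⟩ := hvw_of_up hu hp0
    exact hx (by simp [hu, hp0, hv, hw, Prod.ext_iff])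
  have hne2 : ((v, w) : (Fin nq → ℝ) × (Fin nq → ℝ)) ≠ (0, 0) := by
    intro h
    obtain ⟨hv, hw⟩ := Prod.mk.inj h
    obtain ⟨hu, hp0⟩ := hup_of_vw hv hw
    exact hx (by simp [hu, hp0, hv, hw, Prod.ext_iff])
  refine ⟨?_, hne1, hne2⟩
  obtain ⟨a, b, hab, heq⟩ := hdep
  by_cases ha : a = 0
  · have hb : b ≠ 0 := by
      intro hb; exact hab (by simp [ha, hb])
    have hp0 : p = 0 := by
      funext i
      have := congrFun heq i
      simp [ha] at this
      rcases this with h | h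
      · exact absurd h hb
      · exact h
    have hv : v = 0 := sq_sum_zero v (by rw [← hP, hp0]; simp)
    exact ⟨1, 0, by simp, by simp [hv]⟩
  · set t : ℝ := -(b / a) with ht
    have hu : ∀ i, u i = t * p i := by
      intro i
      have := congrFun heq i
      simp at this
      field_simp [ht]
      have h2 : t * a = -b := by rw [ht, neg_mul, div_mul_cancel₀ b ha]
      apply mul_left_cancel₀ ha
      linear_combination this - p i * h2
    have hP2 : ∑ i, (u i)^2 = t^2 * ∑ i, (p i)^2 := by
      rw [Finset.mul_sum]
      exact Finset.sum_congr rfl fun i _ => by rw [hu i]; ring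
    have hP3 : ∑ i, u i * p i = t * ∑ i, (p i)^2 := by
      rw [Finset.mul_sum]
      exact Finset.sum_congr rfl fun i _ => by rw [hu i]; ring
    have hzero : ∑ j, (t * v j - w j)^2 = 0 := by
      have e : ∑ j, (t * v j - w j)^2 =
          t^2 * (∑ j, (v j)^2) - 2*t*(∑ j, v j * w j) + ∑ j, (w j)^2 := by
        rw [Finset.mul_sum, Finset.mul_sum, ← Finset.sum_sub_distrib,
          ← Finset.sum_add_distrib]
        exact Finset.sum_congr rfl fun j _ => by ring
      rw [e, ← hP, ← hDD, hU, hP2, hP3]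
      ring
    have hfz := sq_sum_zero _ hzero
    refine ⟨t, -1, by simp, ?_⟩
    funext j
    have := congrFun hfz j
    simp at this ⊢
    linarith

end Stmt6
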